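/- In the assignment gadget Û_N (with parameters r ≥ 2 and N ≥ 2): (a) for every i₀ ∈ {1,…,N}, the set S = {v_i : i ≠ i₀} of N−1 input vertices satisfies d(S,y) ≤ r for every non-input vertex y; (b) every set S of vertices of Û_N with d(S,y) ≤ r for all non-input vertices y has |S| ≥ N−1; and (c) every such covering set S with |S| = N−1 consists of input vertices only. -/

import Mathlib

/-- Ordered pairs `i < j` of input indices. -/
abbrev APair (N : ℕ) := {p : Fin N × Fin N // p.1 < p.2}

/-- Number of extra (attachment) vertices per internal path of the assignment gadget:
for odd `r`, a pendant path of `⌊r/2⌋` vertices; for even `r`, the vertex `w` together with its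
two pendant paths of `r/2 - 1` vertices each, i.e. `r - 1` vertices in total (arranged as a
chain whose middle vertex is `w`). -/
def extraLen (r : ℕ) : ℕ := if Even r then r - 1 else r / 2

/-- Vertices of the assignment gadget `Û_N`: input vertices `v_i`; for each pair `i < j` and
each of the two parallel paths (selected by a `Bool`), `r` internal path vertices (the one of
zero-based index `t` being at distance `t+1` from `v_i` and `r-t` from `v_j`); and the extra
attachment vertices (a chain of `extraLen r` vertices per internal path). -/
abbrev AssignV (N r : ℕ) :=
  Fin N ⊕ ((APair N × Bool × Fin r) ⊕ (APair N × Bool × Fin (extraLen r)))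

/-- Edges of the assignment gadget. For odd `r`, the extra chain is attached to the middle
internal vertex (at distance `⌊r/2⌋+1` from both endpoints, i.e. index `⌊r/2⌋`). For even `r`,
the first vertex of the extra chain is attached to the internal vertex at distance `r/2` from
`v_i` (index `r/2 - 1`) and the last one (index `r - 2`) to the internal vertex at distance
`r/2 + 1` from `v_i` (index `r/2`); the middle vertex of the chain is `w`, at distance exactly
`r` from both `v_i` and `v_j`. -/
def assignRel (N r : ℕ) : AssignV N r → AssignV N r → Prop
  | Sum.inl i, Sum.inr (Sum.inl (p, _, t)) =>
      (p.1.1 = i ∧ (t : ℕ) = 0) ∨ (p.1.2 = i ∧ (t : ℕ) + 1 = r)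
  | Sum.inr (Sum.inl (p, b, t)), Sum.inr (Sum.inl (p', b', t')) =>
      p = p' ∧ b = b' ∧ (t' : ℕ) = (t : ℕ) + 1
  | Sum.inr (Sum.inl (p, b, t)), Sum.inr (Sum.inr (p', b', s)) =>
      p = p' ∧ b = b' ∧
        ((¬ Even r ∧ (s : ℕ) = 0 ∧ (t : ℕ) = r / 2) ∨
         (Even r ∧ (((s : ℕ) = 0 ∧ (t : ℕ) + 1 = r / 2) ∨ ((s : ℕ) + 2 = r ∧ (t : ℕ) = r / 2))))
  | Sum.inr (Sum.inr (p, b, s)), Sum.inr (Sum.inr (p', b', s')) =>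
      p = p' ∧ b = b' ∧ (s' : ℕ) = (s : ℕ) + 1
  | _, _ => False

/-- The assignment gadget `Û_N`. -/
def assignGraph (N r : ℕ) : SimpleGraph (AssignV N r) := SimpleGraph.fromRel (assignRel N r)

namespace AssignAux
open SimpleGraph

variable {N r : ℕ}

def inV (p : APair N) (b : Bool) (t : Fin r) : AssignV N r := Sum.inr (Sum.inl (p, b, t))
def exV (p : APair N) (b : Bool) (s : Fin (extraLen r)) : AssignV N r := Sum.inr (Sum.inr (p, b, s))

lemma adj_mk {a c : AssignV N r} (hne : a ≠ c) (h : assignRel N r a c) :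
    (assignGraph N r).Adj a c := by
  rw [assignGraph, SimpleGraph.fromRel_adj]; exact ⟨hne, Or.inl h⟩

lemma edist_le_one {a c : AssignV N r} (h : (assignGraph N r).Adj a c) :
    (assignGraph N r).edist a c ≤ 1 :=
  le_of_eq (edist_eq_one_iff_adj.mpr h)

lemma emono {G : SimpleGraph (AssignV N r)} {x y : AssignV N r} {c c' : ℕ}
    (h : G.edist x y ≤ (c : ℕ∞)) (hcc : c ≤ c') : G.edist x y ≤ (c' : ℕ∞) :=
  le_trans h (by exact_mod_cast hcc)

lemma step {x y z : AssignV N r} {c : ℕ} (h1 : (assignGraph N r).edist x y ≤ (c : ℕ∞))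
    (h2 : (assignGraph N r).Adj y z) :
    (assignGraph N r).edist x z ≤ ((c + 1 : ℕ) : ℕ∞) := by
  calc (assignGraph N r).edist x z
      ≤ (assignGraph N r).edist x y + (assignGraph N r).edist y z :=
        SimpleGraph.edist_triangle
    _ ≤ (c : ℕ∞) + 1 := add_le_add h1 (edist_le_one h2)
    _ = ((c + 1 : ℕ) : ℕ∞) := by push_cast; rfl

lemma lip_walk {V : Type*} {G : SimpleGraph V} (f : V → ℕ)
    (hf : ∀ a b, G.Adj a b → f b ≤ f a + 1) {x y : V} (w : G.Walk x y) :
    f y ≤ f x + w.length := by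
  induction w with
  | nil => simp
  | @cons a v y h w ih =>
      have := hf a v h
      simp only [SimpleGraph.Walk.length_cons]
      omega

lemma lip_edist {V : Type*} {G : SimpleGraph V} (f : V → ℕ)
    (hf : ∀ a b, G.Adj a b → f b ≤ f a + 1) {x y : V} {n : ℕ}
    (h : G.edist x y ≤ (n : ℕ∞)) : f y ≤ f x + n := by
  have hne : G.edist x y ≠ ⊤ := by
    intro ht; rw [ht] at h; simp at h
  obtain ⟨w, hw⟩ := exists_walk_of_edist_ne_top hne
  have hlen : w.length ≤ n := by
    have : (w.length : ℕ∞) ≤ (n : ℕ∞) := by rw [hw]; exact h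
    exact_mod_cast this
  have := lip_walk f hf w
  omega

end AssignAux
namespace AssignAux
open SimpleGraph
variable {N r : ℕ}

/-- potential function: distance to deep vertex of gadget (p,b), capped outside. -/
def fpb (r : ℕ) (p : APair N) (b : Bool) : AssignV N r → ℕ
  | Sum.inl k => if k = p.1.1 ∨ k = p.1.2 then r else r + 1
  | Sum.inr (Sum.inl (p', b', t)) =>
      if p' = p ∧ b' = b then max (t : ℕ) (r - 1 - t) else r + 1
  | Sum.inr (Sum.inr (p', b', s)) =>
      if p' = p ∧ b' = b then ((s : ℕ) - (r / 2 - 1)) + ((r / 2 - 1) - (s : ℕ)) else r + 1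

lemma fpb_lip (hr : 2 ≤ r) (p : APair N) (b : Bool) :
    ∀ a c : AssignV N r, assignRel N r a c →
      fpb r p b a ≤ fpb r p b c + 1 ∧ fpb r p b c ≤ fpb r p b a + 1 := by
  rintro (k | (⟨p', b', t⟩ | ⟨p', b', s⟩)) (k' | (⟨p'', b'', t'⟩ | ⟨p'', b'', s'⟩)) h
  · exact h.elim
  case inl.inr.inl =>
    -- input -- internal
    simp only [fpb]
    split_ifs with h1 h2 h2
    · have ht' := t'.isLt
      rcases h with ⟨-, h0⟩ | ⟨-, h0⟩ <;> omega
    · omega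
    · exfalso
      rcases h with ⟨hk, -⟩ | ⟨hk, -⟩
      · exact h1 (Or.inl (by rw [← hk, h2.1]))
      · exact h1 (Or.inr (by rw [← hk, h2.1]))
    · omega
  · exact h.elim
  · exact h.elim
  case inr.inl.inr.inl =>
    obtain ⟨rfl, rfl, ht⟩ := h
    simp only [fpb]
    split_ifs with h1
    · have h1 := t.isLt
      have h2 := t'.isLt
      omega
    · omega
  case inr.inl.inr.inr =>
    obtain ⟨rfl, rfl, hc⟩ := h
    simp only [fpb]
    split_ifs with h1
    · simp only [Nat.even_iff] at hc
      omega
    · omega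
  · exact h.elim
  · exact h.elim
  case inr.inr.inr.inr =>
    obtain ⟨rfl, rfl, hs⟩ := h
    simp only [fpb]
    split_ifs with h1 <;> omega

end AssignAux
namespace AssignAux
open SimpleGraph
variable {N r : ℕ}

lemma extra_pos (hr : 2 ≤ r) : r / 2 - 1 < extraLen r := by
  unfold extraLen
  split_ifs with h <;> [skip; rw [Nat.even_iff] at h] <;> omega

def zV (hr : 2 ≤ r) (p : APair N) (b : Bool) : AssignV N r :=
  exV p b ⟨r / 2 - 1, extra_pos hr⟩

lemma fpb_zV (hr : 2 ≤ r) (p : APair N) (b : Bool) : fpb r p b (zV hr p b) = 0 := by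
  simp [zV, exV, fpb]

lemma fpb_adj (hr : 2 ≤ r) (p : APair N) (b : Bool) :
    ∀ a c : AssignV N r, (assignGraph N r).Adj a c → fpb r p b c ≤ fpb r p b a + 1 := by
  intro a c h
  rw [assignGraph, SimpleGraph.fromRel_adj] at h
  rcases h.2 with h' | h'
  · exact (fpb_lip hr p b a c h').2
  · exact (fpb_lip hr p b c a h').1

/-- Ball lemma: anything within distance r of the deep vertex of gadget (p,b) is
an endpoint of p or a vertex of gadget (p,b). -/
lemma ball (hr : 2 ≤ r) (p : APair N) (b : Bool) (s : AssignV N r)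
    (h : (assignGraph N r).edist s (zV hr p b) ≤ (r : ℕ∞)) :
    s = Sum.inl p.1.1 ∨ s = Sum.inl p.1.2 ∨
      (∃ x : APair N × Bool × Fin r, s = Sum.inr (Sum.inl x) ∧ x.1 = p ∧ x.2.1 = b) ∨
      (∃ x : APair N × Bool × Fin (extraLen r), s = Sum.inr (Sum.inr x) ∧ x.1 = p ∧ x.2.1 = b) := by
  rw [SimpleGraph.edist_comm] at h
  have hf : fpb r p b s ≤ fpb r p b (zV hr p b) + r := lip_edist _ (fpb_adj hr p b) h
  rw [fpb_zV hr p b] at hf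
  rcases s with k | (⟨p', b', t⟩ | ⟨p', b', s'⟩)
  · by_cases hk : k = p.1.1 ∨ k = p.1.2
    · rcases hk with rfl | rfl
      · exact Or.inl rfl
      · exact Or.inr (Or.inl rfl)
    · simp only [fpb, if_neg hk] at hf; omega
  · by_cases hc : p' = p ∧ b' = b
    · exact Or.inr (Or.inr (Or.inl ⟨(p', b', t), rfl, hc.1, hc.2⟩))
    · simp only [fpb, if_neg hc] at hf; omega
  · by_cases hc : p' = p ∧ b' = b
    · exact Or.inr (Or.inr (Or.inr ⟨(p', b', s'), rfl, hc.1, hc.2⟩))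
    · simp only [fpb, if_neg hc] at hf; omega

end AssignAux
namespace AssignAux
open SimpleGraph
variable {N r : ℕ}

lemma inV_ne_inV {p : APair N} {b : Bool} {t t' : Fin r} (h : (t : ℕ) ≠ (t' : ℕ)) :
    (inV p b t : AssignV N r) ≠ inV p b t' := by
  intro hE
  simp only [inV, Sum.inr.injEq, Sum.inl.injEq, Prod.mk.injEq] at hE
  exact h (congrArg Fin.val hE.2.2)

lemma exV_ne_exV {p : APair N} {b : Bool} {s s' : Fin (extraLen r)} (h : (s : ℕ) ≠ (s' : ℕ)) :
    (exV p b s : AssignV N r) ≠ exV p b s' := by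
  intro hE
  simp only [exV, Sum.inr.injEq, Prod.mk.injEq] at hE
  exact h (congrArg Fin.val hE.2.2)

/-- distance from the left endpoint along the internal path -/
lemma L1 (p : APair N) (b : Bool) :
    ∀ n (hn : n < r), (assignGraph N r).edist (Sum.inl p.1.1) (inV p b ⟨n, hn⟩)
      ≤ ((n + 1 : ℕ) : ℕ∞) := by
  intro n
  induction n with
  | zero =>
      intro hn
      have : (assignGraph N r).Adj (Sum.inl p.1.1) (inV p b ⟨0, hn⟩) :=
        adj_mk (by simp [inV]) (Or.inl ⟨rfl, rfl⟩)
      exact le_trans (edist_le_one this) (by norm_num)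
  | succ n ih =>
      intro hn
      have hn' : n < r := by omega
      exact step (ih hn') (adj_mk (inV_ne_inV (by simp)) ⟨rfl, rfl, rfl⟩)

/-- distance from the right endpoint along the internal path -/
lemma L2 (p : APair N) (b : Bool) :
    ∀ d n (hn : n < r), n + d + 1 = r →
      (assignGraph N r).edist (Sum.inl p.1.2) (inV p b ⟨n, hn⟩) ≤ ((d + 1 : ℕ) : ℕ∞) := by
  intro d
  induction d with
  | zero =>
      intro n hn he
      have : (assignGraph N r).Adj (Sum.inl p.1.2) (inV p b ⟨n, hn⟩) :=
        adj_mk (by simp [inV]) (Or.inr ⟨rfl, by simpa using he⟩)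
      exact le_trans (edist_le_one this) (by norm_num)
  | succ d ih =>
      intro n hn he
      have hn' : n + 1 < r := by omega
      have h1 := ih (n + 1) hn' (by omega)
      have hadj : (assignGraph N r).Adj (inV p b ⟨n + 1, hn'⟩) (inV p b ⟨n, hn⟩) :=
        ((assignGraph N r).adj_symm (adj_mk (inV_ne_inV (by simp)) ⟨rfl, rfl, rfl⟩))
      exact step h1 hadj

/-- walking up the extra chain -/
lemma exUp (p : APair N) (b : Bool) (x : AssignV N r) (c s₀ : ℕ) (h₀ : s₀ < extraLen r)
    (hx : (assignGraph N r).edist x (exV p b ⟨s₀, h₀⟩) ≤ (c : ℕ∞)) :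
    ∀ d (h : s₀ + d < extraLen r),
      (assignGraph N r).edist x (exV p b ⟨s₀ + d, h⟩) ≤ ((c + d : ℕ) : ℕ∞) := by
  intro d
  induction d with
  | zero => intro h; simpa using hx
  | succ d ih =>
      intro h
      have h' : s₀ + d < extraLen r := by omega
      have hadj : (assignGraph N r).Adj (exV p b ⟨s₀ + d, h'⟩) (exV p b ⟨s₀ + (d + 1), h⟩) :=
        adj_mk (exV_ne_exV (by simp only [Fin.val_mk]; omega))
          ⟨rfl, rfl, by simp only [Fin.val_mk]; omega⟩
      exact emono (step (ih h') hadj) (by omega)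

/-- walking down the extra chain -/
lemma exDown (p : APair N) (b : Bool) (x : AssignV N r) (c s₀ : ℕ) (h₀ : s₀ < extraLen r)
    (hx : (assignGraph N r).edist x (exV p b ⟨s₀, h₀⟩) ≤ (c : ℕ∞)) :
    ∀ d n (hn : n < extraLen r), n + d = s₀ →
      (assignGraph N r).edist x (exV p b ⟨n, hn⟩) ≤ ((c + d : ℕ) : ℕ∞) := by
  intro d
  induction d with
  | zero =>
      intro n hn he; subst he; simpa using hx
  | succ d ih =>
      intro n hn he
      have hn' : n + 1 < extraLen r := by omega
      have h1 := ih (n + 1) hn' (by omega)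
      have hadj : (assignGraph N r).Adj (exV p b ⟨n + 1, hn'⟩) (exV p b ⟨n, hn⟩) :=
        (assignGraph N r).adj_symm (adj_mk (exV_ne_exV (by simp only [Fin.val_mk]; omega))
          ⟨rfl, rfl, by simp only [Fin.val_mk]⟩)
      exact emono (step h1 hadj) (by omega)

end AssignAux
namespace AssignAux
open SimpleGraph
variable {N r : ℕ}

lemma exUp' (p : APair N) (b : Bool) (x : AssignV N r) (c s₀ : ℕ) (h₀ : s₀ < extraLen r)
    (hx : (assignGraph N r).edist x (exV p b ⟨s₀, h₀⟩) ≤ (c : ℕ∞))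
    (m : ℕ) (hm : m < extraLen r) (hle : s₀ ≤ m) :
    (assignGraph N r).edist x (exV p b ⟨m, hm⟩) ≤ ((c + (m - s₀) : ℕ) : ℕ∞) := by
  have h := exUp p b x c s₀ h₀ hx (m - s₀) (by omega)
  have hfin : (⟨s₀ + (m - s₀), by omega⟩ : Fin (extraLen r)) = ⟨m, hm⟩ := by
    rw [Fin.mk_eq_mk]; omega
  rwa [hfin] at h

lemma exDown' (p : APair N) (b : Bool) (x : AssignV N r) (c s₀ : ℕ) (h₀ : s₀ < extraLen r)
    (hx : (assignGraph N r).edist x (exV p b ⟨s₀, h₀⟩) ≤ (c : ℕ∞))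
    (m : ℕ) (hm : m < extraLen r) (hle : m ≤ s₀) :
    (assignGraph N r).edist x (exV p b ⟨m, hm⟩) ≤ ((c + (s₀ - m) : ℕ) : ℕ∞) :=
  exDown p b x c s₀ h₀ hx (s₀ - m) m hm (by omega)

lemma cover_inV (hr : 2 ≤ r) (p : APair N) (b : Bool) (t : Fin r) :
    (assignGraph N r).edist (Sum.inl p.1.1) (inV p b t) ≤ (r : ℕ∞) ∧
    (assignGraph N r).edist (Sum.inl p.1.2) (inV p b t) ≤ (r : ℕ∞) := by
  have ht := t.isLt
  constructor
  · exact emono (L1 p b t ht) (by omega)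
  · exact emono (L2 p b (r - 1 - t) t ht (by omega)) (by omega)

lemma cover_exV (hr : 2 ≤ r) (p : APair N) (b : Bool) (e : Fin (extraLen r)) :
    (assignGraph N r).edist (Sum.inl p.1.1) (exV p b e) ≤ (r : ℕ∞) ∧
    (assignGraph N r).edist (Sum.inl p.1.2) (exV p b e) ≤ (r : ℕ∞) := by
  have hs : (e : ℕ) < extraLen r := e.isLt
  by_cases hev : Even r
  · have hr2 : r % 2 = 0 := Nat.even_iff.mp hev
    have hEL : extraLen r = r - 1 := by rw [extraLen, if_pos hev]
    have h0EL : 0 < extraLen r := by omega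
    have hm2 : r - 2 < extraLen r := by omega
    have ht1 : r / 2 - 1 < r := by omega
    have ht2 : r / 2 < r := by omega
    have adj1 : (assignGraph N r).Adj (inV p b ⟨r / 2 - 1, ht1⟩) (exV p b ⟨0, h0EL⟩) :=
      adj_mk (by simp [inV, exV])
        ⟨rfl, rfl, Or.inr ⟨hev, Or.inl ⟨rfl, show r / 2 - 1 + 1 = r / 2 by omega⟩⟩⟩
    have adj2 : (assignGraph N r).Adj (inV p b ⟨r / 2, ht2⟩) (exV p b ⟨r - 2, hm2⟩) :=
      adj_mk (by simp [inV, exV])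
        ⟨rfl, rfl, Or.inr ⟨hev, Or.inr ⟨show r - 2 + 2 = r by omega, rfl⟩⟩⟩
    constructor
    · rcases le_or_gt (e : ℕ) (r / 2 - 1) with hc | hc
      · have b1 := step (L1 p b (r / 2 - 1) ht1) adj1
        exact emono (exUp' p b _ _ 0 h0EL b1 e hs (by omega)) (by omega)
      · have b1 := step (L1 p b (r / 2) ht2) adj2
        exact emono (exDown' p b _ _ (r - 2) hm2 b1 e hs (by omega)) (by omega)
    · rcases le_or_gt ((e : ℕ) + 2) (r / 2) with hc | hc
      · have b1 := step (L2 p b (r - r / 2) (r / 2 - 1) ht1 (by omega)) adj1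
        exact emono (exUp' p b _ _ 0 h0EL b1 e hs (by omega)) (by omega)
      · have b1 := step (L2 p b (r / 2 - 1) (r / 2) ht2 (by omega)) adj2
        exact emono (exDown' p b _ _ (r - 2) hm2 b1 e hs (by omega)) (by omega)
  · have hr2 : r % 2 = 1 := Nat.odd_iff.mp (Nat.not_even_iff_odd.mp hev)
    have hEL : extraLen r = r / 2 := by rw [extraLen, if_neg hev]
    have h0EL : 0 < extraLen r := by omega
    have ht2 : r / 2 < r := by omega
    have adj1 : (assignGraph N r).Adj (inV p b ⟨r / 2, ht2⟩) (exV p b ⟨0, h0EL⟩) :=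
      adj_mk (by simp [inV, exV]) ⟨rfl, rfl, Or.inl ⟨hev, rfl, rfl⟩⟩
    constructor
    · have b1 := step (L1 p b (r / 2) ht2) adj1
      exact emono (exUp' p b _ _ 0 h0EL b1 e hs (by omega)) (by omega)
    · have b1 := step (L2 p b (r / 2) (r / 2) ht2 (by omega)) adj1
      exact emono (exUp' p b _ _ 0 h0EL b1 e hs (by omega)) (by omega)

end AssignAux
namespace AssignAux
open SimpleGraph
variable {N r : ℕ}

def pbOf : AssignV N r → Option (APair N × Bool)
  | Sum.inl _ => none
  | Sum.inr (Sum.inl (p, b, _)) => some (p, b)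
  | Sum.inr (Sum.inr (p, b, _)) => some (p, b)

def mkPair (i j : Fin N) (h : i ≠ j) : APair N :=
  if hlt : i < j then ⟨(i, j), hlt⟩ else ⟨(j, i), h.lt_or_gt.resolve_left hlt⟩

lemma mkPair_cases (i j : Fin N) (h : i ≠ j) :
    ((mkPair i j h).1.1 = i ∧ (mkPair i j h).1.2 = j) ∨
    ((mkPair i j h).1.1 = j ∧ (mkPair i j h).1.2 = i) := by
  unfold mkPair; split_ifs <;> simp

lemma wit (hr : 2 ≤ r) (S : Finset (AssignV N r))
    (hS : ∀ y : AssignV N r, (¬ ∃ i : Fin N, y = Sum.inl i) →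
      ∃ s ∈ S, (assignGraph N r).edist s y ≤ (r : ℕ∞))
    (q : APair N) (b : Bool) (h1 : Sum.inl q.1.1 ∉ S) (h2 : Sum.inl q.1.2 ∉ S) :
    ∃ s ∈ S, ∃ x : APair N × Bool, pbOf s = some x ∧ x.1 = q ∧ x.2 = b := by
  obtain ⟨s, hsS, hsd⟩ := hS (zV hr q b) (by rintro ⟨i, h⟩; simp [zV, exV] at h)
  rcases ball hr q b s hsd with rfl | rfl | ⟨⟨xp, xb, xt⟩, rfl, hx1, hx2⟩ |
    ⟨⟨xp, xb, xs⟩, rfl, hx1, hx2⟩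
  · exact absurd hsS h1
  · exact absurd hsS h2
  · exact ⟨_, hsS, (xp, xb), rfl, by simpa using hx1, by simpa using hx2⟩
  · exact ⟨_, hsS, (xp, xb), rfl, by simpa using hx1, by simpa using hx2⟩

lemma slot_inj {i i' i₀ a c : Fin N} (hac : a < c) (hi : a = i ∨ c = i) (hi' : a = i' ∨ c = i')
    (h₀ : a = i₀ ∨ c = i₀) (hne : i ≠ i₀) (hne' : i' ≠ i₀) : i = i' := by
  rw [Fin.lt_def] at hac
  simp only [Fin.ext_iff] at hi hi' h₀ hne hne' ⊢
  rcases hi with h1 | h1 <;> rcases hi' with h2 | h2 <;> rcases h₀ with h3 | h3 <;> omega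

/-- the key counting lemma -/
lemma key (hr : 2 ≤ r) (hN : 2 ≤ N) (S : Finset (AssignV N r))
    (hS : ∀ y : AssignV N r, (¬ ∃ i : Fin N, y = Sum.inl i) →
      ∃ s ∈ S, (assignGraph N r).edist s y ≤ (r : ℕ∞)) :
    N - 1 ≤ S.card ∧ (S.card = N - 1 → ∀ s ∈ S, ∃ i : Fin N, s = Sum.inl i) := by
  classical
  by_cases hbad : ∃ i j : Fin N, i ≠ j ∧ Sum.inl i ∉ S ∧ Sum.inl j ∉ S
  · obtain ⟨i₀, j₀, hij, hi₀, hj₀⟩ := hbad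
    -- we show N ≤ S.card
    have hex : ∀ i : Fin N, ∃ s, s ∈ S ∧
        ((s = Sum.inl i) ∨
         (i ≠ i₀ ∧ ∃ x : APair N × Bool, pbOf s = some x ∧ x.2 = true ∧
            (x.1.1.1 = i ∨ x.1.1.2 = i) ∧ (x.1.1.1 = i₀ ∨ x.1.1.2 = i₀)) ∨
         (i = i₀ ∧ ∃ x : APair N × Bool, pbOf s = some x ∧ x.2 = false)) := by
      intro i
      by_cases hiS : Sum.inl i ∈ S
      · exact ⟨Sum.inl i, hiS, Or.inl rfl⟩
      by_cases hii : i = i₀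
      · obtain ⟨s, hsS, x, hx, hx1, hx2⟩ := wit hr S hS (mkPair i₀ j₀ hij) false
          (by rcases mkPair_cases i₀ j₀ hij with ⟨e1, e2⟩ | ⟨e1, e2⟩ <;> rw [e1] <;> assumption)
          (by rcases mkPair_cases i₀ j₀ hij with ⟨e1, e2⟩ | ⟨e1, e2⟩ <;> rw [e2] <;> assumption)
        exact ⟨s, hsS, Or.inr (Or.inr ⟨hii, x, hx, hx2⟩)⟩
      · obtain ⟨s, hsS, x, hx, hx1, hx2⟩ := wit hr S hS (mkPair i i₀ hii) true
          (by rcases mkPair_cases i i₀ hii with ⟨e1, e2⟩ | ⟨e1, e2⟩ <;> rw [e1] <;> assumption)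
          (by rcases mkPair_cases i i₀ hii with ⟨e1, e2⟩ | ⟨e1, e2⟩ <;> rw [e2] <;> assumption)
        refine ⟨s, hsS, Or.inr (Or.inl ⟨hii, x, hx, hx2, ?_, ?_⟩)⟩
        · rcases mkPair_cases i i₀ hii with ⟨e1, e2⟩ | ⟨e1, e2⟩
          · exact Or.inl (by rw [hx1]; exact e1)
          · exact Or.inr (by rw [hx1]; exact e2)
        · rcases mkPair_cases i i₀ hii with ⟨e1, e2⟩ | ⟨e1, e2⟩
          · exact Or.inr (by rw [hx1]; exact e2)
          · exact Or.inl (by rw [hx1]; exact e1)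
    choose g hgS hgP using hex
    have hNS : N ≤ S.card := by
      have hinj : Set.InjOn g (Finset.univ : Finset (Fin N)) := by
        intro i _ i' _ heq
        rcases hgP i with h1 | ⟨hne1, x1, hx1, hb1, hm1, hm1'⟩ | ⟨he1, x1, hx1, hb1⟩ <;>
          rcases hgP i' with h2 | ⟨hne2, x2, hx2, hb2, hm2, hm2'⟩ | ⟨he2, x2, hx2, hb2⟩
        · rw [heq] at h1; rw [h1] at h2; exact Sum.inl.inj h2
        · rw [heq] at h1; rw [h1] at hx2; simp [pbOf] at hx2
        · rw [heq] at h1; rw [h1] at hx2; simp [pbOf] at hx2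
        · rw [← heq] at h2; rw [h2] at hx1; simp [pbOf] at hx1
        · rw [heq] at hx1; rw [hx1] at hx2
          obtain rfl : x1 = x2 := by injection hx2
          exact slot_inj x1.1.2 hm1 hm2 hm1' hne1 hne2
        · rw [heq] at hx1; rw [hx1] at hx2
          obtain rfl : x1 = x2 := by injection hx2
          rw [hb1] at hb2; exact absurd hb2 (by simp)
        · rw [← heq] at h2; rw [h2] at hx1; simp [pbOf] at hx1
        · rw [heq] at hx1; rw [hx1] at hx2
          obtain rfl : x1 = x2 := by injection hx2
          rw [hb1] at hb2; exact absurd hb2 (by simp)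
        · rw [he1, he2]
      have := Finset.card_le_card_of_injOn g (fun i _ => hgS i) hinj
      simpa using this
    exact ⟨by omega, fun hcard => by omega⟩
  · push_neg at hbad
    set A : Finset (Fin N) := Finset.univ.filter (fun i => Sum.inl i ∈ S) with hA
    have hAcard : N - 1 ≤ A.card := by
      by_contra hlt
      have hsd : (Finset.univ \ A).card = N - A.card := by
        rw [Finset.card_sdiff_of_subset (Finset.subset_univ A)]; simp
      have h2 : 1 < (Finset.univ \ A).card := by omega
      obtain ⟨i, hi, j, hj, hij⟩ := Finset.one_lt_card.mp h2
      simp only [Finset.mem_sdiff, Finset.mem_univ, true_and, hA, Finset.mem_filter,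
        not_and] at hi hj
      exact hj (hbad i j hij hi)
    have hAS : A.card ≤ S.card := by
      apply Finset.card_le_card_of_injOn Sum.inl
      · intro i hi; have hi : i ∈ A := hi; simp only [hA, Finset.mem_filter] at hi; exact hi.2
      · exact fun a _ b _ h => Sum.inl_injective h
    refine ⟨by omega, fun hcard s hsS => ?_⟩
    by_contra hni
    push_neg at hni
    have hsnot : s ∉ A.image Sum.inl := by
      simp only [Finset.mem_image]
      rintro ⟨i, -, rfl⟩
      exact hni i rfl
    have hsub : insert s (A.image Sum.inl) ⊆ S := by
      apply Finset.insert_subset hsS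
      intro y hy
      simp only [Finset.mem_image, hA, Finset.mem_filter] at hy
      obtain ⟨i, ⟨-, hi⟩, rfl⟩ := hy
      exact hi
    have hcard2 := Finset.card_le_card hsub
    rw [Finset.card_insert_of_notMem hsnot,
      Finset.card_image_of_injective _ Sum.inl_injective] at hcard2
    omega

end AssignAux

/-- (a) Any `N-1` of the input vertices cover all non-input vertices of `Û_N` within
distance `r`; (b) any set covering all non-input vertices within distance `r` has at least
`N-1` vertices; (c) any such covering set of size exactly `N-1` consists of input vertices. -/
theorem stmt2 (N r : ℕ) (hr : 2 ≤ r) (hN : 2 ≤ N) :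
    (∀ i₀ : Fin N, ∀ y : AssignV N r, (¬ ∃ i : Fin N, y = Sum.inl i) →
      ∃ i : Fin N, i ≠ i₀ ∧ (assignGraph N r).edist (Sum.inl i) y ≤ (r : ℕ∞)) ∧
    (∀ S : Finset (AssignV N r),
      (∀ y : AssignV N r, (¬ ∃ i : Fin N, y = Sum.inl i) →
        ∃ s ∈ S, (assignGraph N r).edist s y ≤ (r : ℕ∞)) →
      N - 1 ≤ S.card) ∧
    (∀ S : Finset (AssignV N r),
      (∀ y : AssignV N r, (¬ ∃ i : Fin N, y = Sum.inl i) →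
        ∃ s ∈ S, (assignGraph N r).edist s y ≤ (r : ℕ∞)) →
      S.card = N - 1 → ∀ s ∈ S, ∃ i : Fin N, s = Sum.inl i) := by
  refine ⟨?_, fun S hS => (AssignAux.key hr hN S hS).1, fun S hS => (AssignAux.key hr hN S hS).2⟩
  intro i₀ y hy
  rcases y with k | (⟨p, b, t⟩ | ⟨p, b, s⟩)
  · exact absurd ⟨k, rfl⟩ hy
  · by_cases h : p.1.1 = i₀
    · exact ⟨p.1.2, by rw [← h]; exact (Fin.ne_of_lt p.2).symm, (AssignAux.cover_inV hr p b t).2⟩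
    · exact ⟨p.1.1, h, (AssignAux.cover_inV hr p b t).1⟩
  · by_cases h : p.1.1 = i₀
    · exact ⟨p.1.2, by rw [← h]; exact (Fin.ne_of_lt p.2).symm, (AssignAux.cover_exV hr p b s).2⟩
    · exact ⟨p.1.1, h, (AssignAux.cover_exV hr p b s).1⟩
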